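/- Value iteration converges: the Bellman optimality operator T has a unique fixed point Q⋆ : S × A → ℝ, and for every initial action-value function Q₀ : S × A → ℝ the sequence of iterates (T^n Q₀)_{n∈ℕ} converges (in the supremum norm) to Q⋆. -/

import Mathlib

open Finset

/-- The Bellman optimality operator `T` on action-value functions for a finite
discounted MDP: `(T Q)(s,a) = l(s,a) + γ ∑_{s'} P(s'|s,a) · min_{a'} Q(s',a')`. -/
noncomputable def Topt {S A : Type*} [Fintype S] [Fintype A] [Nonempty A]
    (P : S → A → PMF S) (l : S → A → ℝ) (γ : ℝ) (Q : S × A → ℝ) : S × A → ℝ :=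
  fun sa => l sa.1 sa.2 +
    γ * ∑ s' : S, (P sa.1 sa.2 s').toReal *
      (univ.inf' univ_nonempty fun a' => Q (s', a'))

/-- Value iteration converges: `T` has a unique fixed point `Q⋆`, and for every
initial `Q₀` the iterates `T^n Q₀` converge (in the supremum norm) to `Q⋆`. -/
theorem value_iteration_converges
    {S A : Type*} [Fintype S] [Fintype A] [Nonempty S] [Nonempty A]
    (P : S → A → PMF S) (l : S → A → ℝ) (γ : ℝ) (hγ0 : 0 ≤ γ) (hγ1 : γ < 1) :
    ∃ Qstar : S × A → ℝ,
      Topt P l γ Qstar = Qstar ∧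
      (∀ Q' : S × A → ℝ, Topt P l γ Q' = Q' → Q' = Qstar) ∧
      ∀ Q₀ : S × A → ℝ,
        Filter.Tendsto (fun n : ℕ => (Topt P l γ)^[n] Q₀) Filter.atTop (nhds Qstar) := by
  have hsum : ∀ s a, ∑ s' : S, ((P s a) s').toReal = 1 := by
    intro s a
    have h1 : ∑ s' : S, ((P s a) s') = 1 := by
      rw [← tsum_fintype (L := SummationFilter.unconditional _)]; exact (P s a).tsum_coe
    rw [← ENNReal.toReal_sum (fun s' _ => (P s a).apply_ne_top s'), h1, ENNReal.toReal_one]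
  have hcontr : ContractingWith ⟨γ, hγ0⟩ (Topt P l γ) := by
    refine ⟨by exact_mod_cast hγ1, LipschitzWith.of_dist_le_mul fun Q1 Q2 => ?_⟩
    show dist _ _ ≤ γ * dist Q1 Q2
    rw [dist_pi_le_iff (mul_nonneg hγ0 dist_nonneg)]
    intro sa
    obtain ⟨s, a⟩ := sa
    have hinf : ∀ s' : S,
        |(univ.inf' univ_nonempty fun a' => Q1 (s', a')) -
          (univ.inf' univ_nonempty fun a' => Q2 (s', a'))| ≤ dist Q1 Q2 := by
      intro s'
      have hpt : ∀ a' : A, |Q1 (s', a') - Q2 (s', a')| ≤ dist Q1 Q2 := fun a' =>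
        (Real.dist_eq _ _) ▸ dist_le_pi_dist Q1 Q2 (s', a')
      rw [abs_sub_le_iff]
      constructor
      · obtain ⟨a', _, ha'⟩ := Finset.exists_mem_eq_inf' (univ_nonempty (α := A))
          (fun a' => Q2 (s', a'))
        calc (univ.inf' univ_nonempty fun a' => Q1 (s', a')) -
              (univ.inf' univ_nonempty fun a' => Q2 (s', a'))
            ≤ Q1 (s', a') - Q2 (s', a') := by
              rw [ha']; exact sub_le_sub_right (Finset.inf'_le _ (Finset.mem_univ a')) _
          _ ≤ |Q1 (s', a') - Q2 (s', a')| := le_abs_self _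
          _ ≤ dist Q1 Q2 := hpt a'
      · obtain ⟨a', _, ha'⟩ := Finset.exists_mem_eq_inf' (univ_nonempty (α := A))
          (fun a' => Q1 (s', a'))
        calc (univ.inf' univ_nonempty fun a' => Q2 (s', a')) -
              (univ.inf' univ_nonempty fun a' => Q1 (s', a'))
            ≤ Q2 (s', a') - Q1 (s', a') := by
              rw [ha']; exact sub_le_sub_right (Finset.inf'_le _ (Finset.mem_univ a')) _
          _ ≤ |Q2 (s', a') - Q1 (s', a')| := le_abs_self _
          _ ≤ dist Q1 Q2 := by rw [abs_sub_comm]; exact hpt a'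
    have : dist (Topt P l γ Q1 (s, a)) (Topt P l γ Q2 (s, a)) ≤ γ * dist Q1 Q2 := by
      rw [Real.dist_eq]
      simp only [Topt]
      rw [add_sub_add_left_eq_sub, ← mul_sub, ← Finset.sum_sub_distrib]
      have hterm : ∀ s' : S, ((P s a) s').toReal *
            (univ.inf' univ_nonempty fun a' => Q1 (s', a')) -
          ((P s a) s').toReal * (univ.inf' univ_nonempty fun a' => Q2 (s', a')) =
          ((P s a) s').toReal * ((univ.inf' univ_nonempty fun a' => Q1 (s', a')) -
            (univ.inf' univ_nonempty fun a' => Q2 (s', a'))) := fun s' => (mul_sub _ _ _).symm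
      calc |γ * ∑ s' : S, (((P s a) s').toReal *
              (univ.inf' univ_nonempty fun a' => Q1 (s', a')) -
            ((P s a) s').toReal * (univ.inf' univ_nonempty fun a' => Q2 (s', a')))|
          = γ * |∑ s' : S, ((P s a) s').toReal *
              ((univ.inf' univ_nonempty fun a' => Q1 (s', a')) -
                (univ.inf' univ_nonempty fun a' => Q2 (s', a')))| := by
            rw [abs_mul, abs_of_nonneg hγ0]
            congr 1
            exact congrArg abs (Finset.sum_congr rfl fun s' _ => hterm s')
        _ ≤ γ * ∑ s' : S, ((P s a) s').toReal * dist Q1 Q2 := by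
            refine mul_le_mul_of_nonneg_left ?_ hγ0
            refine (Finset.abs_sum_le_sum_abs _ _).trans (Finset.sum_le_sum fun s' _ => ?_)
            rw [abs_mul, abs_of_nonneg ENNReal.toReal_nonneg]
            exact mul_le_mul_of_nonneg_left (hinf s') ENNReal.toReal_nonneg
        _ = γ * dist Q1 Q2 := by rw [← Finset.sum_mul, hsum s a, one_mul]
    simpa using this
  exact ⟨ContractingWith.fixedPoint (Topt P l γ) hcontr,
    hcontr.fixedPoint_isFixedPt.eq, fun Q' hQ' => hcontr.fixedPoint_unique hQ',
    fun Q₀ => hcontr.tendsto_iterate_fixedPoint Q₀⟩
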